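/- Open nodes form an antichain under DFS: in every reachable state of the DFS frontier process, no position in the stack is a prefix of another distinct position in the stack; that is, no open node is an ancestor (and in particular no descendant) of another open node. -/

import Mathlib

/-- Small-step dynamics of the DFS frontier process on binary-tree positions:
from `q :: L` either fathom the node at position `q`, or branch it, pushing its
two children. -/
inductive FStep : List (List Bool) → List (List Bool) → Prop
  | fathom (q : List Bool) (L : List (List Bool)) : FStep (q :: L) L
  | branch (q : List Bool) (L : List (List Bool)) :
      FStep (q :: L) ((q ++ [false]) :: (q ++ [true]) :: L)

/-- A frontier state is reachable if it is obtained from the initial state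
`[[]]` (only the root is open) by a finite sequence of steps. -/
def Reachable (S : List (List Bool)) : Prop :=
  Relation.ReflTransGen FStep [([] : List Bool)] S

def DFSInv (S : List (List Bool)) : Prop :=
  S.Pairwise (fun p q => ¬ p <+: q ∧ ¬ q <+: p)

lemma prefix_concat' {r q : List Bool} {b : Bool} (h : r <+: q ++ [b]) :
    r <+: q ∨ r = q ++ [b] := by
  rcases h with ⟨t, ht⟩
  rcases List.eq_nil_or_concat t with rfl | ⟨t', a, rfl⟩
  · right; simpa using ht
  · left
    rw [List.concat_eq_append, ← List.append_assoc] at ht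
    have h2 := List.append_inj' ht rfl
    exact ⟨t', h2.1⟩

lemma inv_step {S T : List (List Bool)} (h : FStep S T) (hI : DFSInv S) :
    DFSInv T := by
  cases h with
  | fathom q L => exact (List.pairwise_cons.mp hI).2
  | branch q L =>
    rw [DFSInv, List.pairwise_cons, List.pairwise_cons]
    obtain ⟨hq, hL⟩ := List.pairwise_cons.mp hI
    have key : ∀ b : Bool, ∀ r ∈ L, ¬ q ++ [b] <+: r ∧ ¬ r <+: q ++ [b] := by
      intro b r hr
      obtain ⟨h1, h2⟩ := hq r hr
      constructor
      · intro hp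
        exact h1 (((q.prefix_append [b]).trans hp))
      · intro hp
        rcases prefix_concat' hp with h3 | rfl
        · exact h2 h3
        · exact h1 (q.prefix_append [b])
    refine ⟨?_, key true, hL⟩
    intro r hr
    rcases List.mem_cons.mp hr with rfl | hr
    · constructor <;> intro hp <;>
        simpa using List.IsPrefix.eq_of_length hp (by simp)
    · exact key false r hr

/-- Open nodes form an antichain under DFS: in every reachable state, no
position in the stack is a prefix of another distinct position in the stack. -/
theorem dfs_antichain (S : List (List Bool)) (hS : Reachable S) :
    ∀ p ∈ S, ∀ q ∈ S, p ≠ q → ¬ p <+: q := by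
  have hI : DFSInv S := by
    induction hS with
    | refl => simp [DFSInv]
    | tail _ hstep ih => exact inv_step hstep ih
  intro p hp q hq hne
  haveI : Std.Symm (fun p q : List Bool => ¬ p <+: q ∧ ¬ q <+: p) := ⟨fun a b h => ⟨h.2, h.1⟩⟩
  exact (hI.forall hp hq hne).1
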